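/- For all integers n ≥ 1 and d ≥ 0, the complex-valued function f(x) := Σ_{m=0}^{d} (x + 2m − d) / ( x · ((d−m)!)^n · ∏_{l=1}^{m} (x + l)^n ), defined for x ≠ 0 in a punctured neighborhood of 0 in ℂ, tends as x → 0 (through nonzero values) to the limit (1 / (2·(d!)^n)) · Σ_{m=0}^{d} C(d,m)^n · ( n·(d − 2m)·(γ(m) − γ(d−m)) + 2 ). -/

import Mathlib

open Finset Filter

/-- `gam m` is the `m`-th harmonic number `γ(m) = Σ_{j=1}^m 1/j`, with `γ(0) = 0`. -/
def gam (m : ℕ) : ℚ := ∑ j ∈ Finset.range m, (1 : ℚ) / (j + 1)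

/-- Extraction of the constant term of the degree-`d` coefficient of the `J`-function of
`G(2,n)` (Section 3): for `n ≥ 1` and `d ≥ 0`, the function
`f(x) = Σ_{m=0}^d (x + 2m - d)/(x ((d-m)!)^n ∏_{l=1}^m (x+l)^n)` tends, as `x → 0`
through nonzero values, to
`(1/(2 (d!)^n)) Σ_{m=0}^d C(d,m)^n (n (d-2m)(γ(m) - γ(d-m)) + 2)`. -/
noncomputable def Pf (n m : ℕ) (x : ℂ) : ℂ := ∏ l ∈ Finset.Icc 1 m, (x + (l : ℂ)) ^ n

lemma Pf_zero (n m : ℕ) : Pf n m 0 = ((m.factorial : ℂ)) ^ n := by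
  unfold Pf
  rw [Finset.prod_pow]
  congr 1
  simp only [zero_add]
  rw [← Nat.cast_prod]
  congr 1
  rw [← Finset.Ico_add_one_right_eq_Icc]
  exact Finset.prod_Ico_id_eq_factorial m

lemma gam_succ (m : ℕ) : gam (m + 1) = gam m + 1 / (m + 1) := by
  simp [gam, Finset.sum_range_succ]

lemma Pf_hasDerivAt (n : ℕ) (hn : 1 ≤ n) (m : ℕ) :
    HasDerivAt (Pf n m) (((m.factorial : ℂ)) ^ n * n * ((gam m : ℚ) : ℂ)) 0 := by
  obtain ⟨k, rfl⟩ : ∃ k, n = k + 1 := ⟨n - 1, (Nat.succ_pred_eq_of_pos hn).symm⟩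
  induction m with
  | zero =>
    rw [show Pf (k+1) 0 = fun _ => (1:ℂ) from funext fun x => by simp [Pf]]
    simpa [gam] using (hasDerivAt_const (0 : ℂ) (1 : ℂ))
  | succ m ih =>
    have hfun : ∀ x : ℂ, Pf (k+1) (m+1) x = Pf (k+1) m x * (x + ((m:ℂ)+1)) ^ (k+1) := by
      intro x
      unfold Pf
      rw [Finset.prod_Icc_succ_top (Nat.le_add_left 1 m)]
      push_cast
      ring
    have h1 : HasDerivAt (fun x : ℂ => (x + ((m:ℂ)+1)) ^ (k+1))
        (((k:ℂ)+1) * ((0:ℂ) + ((m:ℂ)+1)) ^ k) 0 := by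
      have hx : HasDerivAt (fun x : ℂ => x + ((m:ℂ)+1)) 1 0 := (hasDerivAt_id 0).add_const _
      have := hx.fun_pow (k+1)
      simpa using this
    have h2 := ih.fun_mul h1
    rw [show (fun x => Pf (k+1) m x * (x + ((m:ℂ)+1)) ^ (k+1)) = Pf (k+1) (m+1) from
      (funext fun x => (hfun x).symm)] at h2
    refine HasDerivAt.congr_deriv h2 ?_
    rw [Pf_zero, gam_succ, Nat.factorial_succ]
    have hm1 : ((m:ℂ) + 1) ≠ 0 := Nat.cast_add_one_ne_zero m
    push_cast [mul_pow]
    field_simp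
    ring

noncomputable def Gf (n d : ℕ) (x : ℂ) : ℂ :=
  ∑ m ∈ Finset.range (d + 1),
    (x + 2 * (m : ℂ) - (d : ℂ)) / ((((d - m).factorial : ℂ)) ^ n * Pf n m x)

lemma fact_pow_ne (a n : ℕ) : ((a.factorial : ℂ)) ^ n ≠ 0 :=
  pow_ne_zero _ (Nat.cast_ne_zero.mpr a.factorial_ne_zero)

lemma Gf_zero (n d : ℕ) : Gf n d 0 = 0 := by
  have key : Gf n d 0 = - Gf n d 0 := by
    conv_lhs => rw [Gf, ← Finset.sum_range_reflect]
    rw [Gf, ← Finset.sum_neg_distrib]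
    apply Finset.sum_congr rfl
    intro m hm
    have hm' : m ≤ d := Nat.lt_succ_iff.mp (Finset.mem_range.mp hm)
    have e1 : d + 1 - 1 - m = d - m := by omega
    have e2 : d - (d - m) = m := by omega
    rw [e1, e2, Pf_zero, Pf_zero]
    have e3 : ((d - m : ℕ) : ℂ) = (d : ℂ) - m := by
      push_cast [hm']; ring
    rw [e3, ← neg_div]
    rw [div_eq_div_iff (by exact mul_ne_zero (fact_pow_ne _ _) (fact_pow_ne _ _))
      (by exact mul_ne_zero (fact_pow_ne _ _) (fact_pow_ne _ _))]
    ring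
  linear_combination key / 2

lemma Gf_hasDerivAt (n d : ℕ) (hn : 1 ≤ n) :
    HasDerivAt (Gf n d)
      (∑ m ∈ Finset.range (d + 1),
        (1 + ((d : ℂ) - 2 * m) * n * ((gam m : ℚ) : ℂ)) /
          ((((d - m).factorial : ℂ)) ^ n * ((m.factorial : ℂ)) ^ n)) 0 := by
  apply HasDerivAt.fun_sum
  intro m hm
  have hu : HasDerivAt (fun x : ℂ => x + 2 * (m : ℂ) - (d : ℂ)) 1 0 :=
    ((hasDerivAt_id 0).add_const _).sub_const _
  have hv : HasDerivAt (fun x : ℂ => (((d - m).factorial : ℂ)) ^ n * Pf n m x)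
      ((((d - m).factorial : ℂ)) ^ n * (((m.factorial : ℂ)) ^ n * n * ((gam m : ℚ) : ℂ))) 0 :=
    (Pf_hasDerivAt n hn m).const_mul _
  have hv0 : (((d - m).factorial : ℂ)) ^ n * Pf n m 0 ≠ 0 := by
    rw [Pf_zero]; exact mul_ne_zero (fact_pow_ne _ _) (fact_pow_ne _ _)
  have h := hu.fun_div hv hv0
  refine HasDerivAt.congr_deriv h ?_
  symm
  rw [Pf_zero]
  rw [div_eq_div_iff (mul_ne_zero (fact_pow_ne _ _) (fact_pow_ne _ _))
    (pow_ne_zero 2 (by rw [Pf_zero] at hv0; exact hv0))]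
  ring

lemma sum_eq (n d : ℕ) :
    (∑ m ∈ Finset.range (d + 1),
        (1 + ((d : ℂ) - 2 * m) * n * ((gam m : ℚ) : ℂ)) /
          ((((d - m).factorial : ℂ)) ^ n * ((m.factorial : ℂ)) ^ n))
    = (1 / (2 * ((d.factorial : ℂ)) ^ n)) *
        ∑ m ∈ Finset.range (d + 1), (d.choose m : ℂ) ^ n *
          ((n : ℂ) * ((d : ℂ) - 2 * m) * (((gam m : ℚ) : ℂ) - ((gam (d - m) : ℚ) : ℂ)) + 2) := by
  have hrefl : ∑ m ∈ Finset.range (d + 1),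
        (d.choose m : ℂ) ^ n * ((n : ℂ) * ((d : ℂ) - 2 * m) * (-((gam (d - m) : ℚ) : ℂ)))
      = ∑ m ∈ Finset.range (d + 1),
        (d.choose m : ℂ) ^ n * ((n : ℂ) * ((d : ℂ) - 2 * m) * ((gam m : ℚ) : ℂ)) := by
    rw [← Finset.sum_range_reflect]
    apply Finset.sum_congr rfl
    intro m hm
    have hm' : m ≤ d := Nat.lt_succ_iff.mp (Finset.mem_range.mp hm)
    have e1 : d + 1 - 1 - m = d - m := by omega
    have e2 : d - (d - m) = m := by omega
    have e3 : ((d - m : ℕ) : ℂ) = (d : ℂ) - m := by push_cast [hm']; ring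
    rw [e1, e2, Nat.choose_symm hm', e3]
    ring
  have hL : ∀ m ∈ Finset.range (d + 1),
      (1 + ((d : ℂ) - 2 * m) * n * ((gam m : ℚ) : ℂ)) /
          ((((d - m).factorial : ℂ)) ^ n * ((m.factorial : ℂ)) ^ n)
      = (d.choose m : ℂ) ^ n * (1 + ((d : ℂ) - 2 * m) * n * ((gam m : ℚ) : ℂ)) /
          ((d.factorial : ℂ)) ^ n := by
    intro m hm
    have hm' : m ≤ d := Nat.lt_succ_iff.mp (Finset.mem_range.mp hm)
    have hC : ((d.choose m : ℂ)) * (m.factorial : ℂ) * ((d - m).factorial : ℂ)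
        = (d.factorial : ℂ) := by
      exact_mod_cast Nat.choose_mul_factorial_mul_factorial hm'
    rw [div_eq_div_iff (mul_ne_zero (fact_pow_ne _ _) (fact_pow_ne _ _)) (fact_pow_ne _ _),
      ← hC, mul_pow, mul_pow]
    ring
  rw [Finset.sum_congr rfl hL, ← Finset.sum_div]
  have hS : ∑ m ∈ Finset.range (d + 1), (d.choose m : ℂ) ^ n *
        ((n : ℂ) * ((d : ℂ) - 2 * m) * (((gam m : ℚ) : ℂ) - ((gam (d - m) : ℚ) : ℂ)) + 2)
      = 2 * ∑ m ∈ Finset.range (d + 1),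
        (d.choose m : ℂ) ^ n * (1 + ((d : ℂ) - 2 * m) * n * ((gam m : ℚ) : ℂ)) := by
    calc ∑ m ∈ Finset.range (d + 1), (d.choose m : ℂ) ^ n *
          ((n : ℂ) * ((d : ℂ) - 2 * m) * (((gam m : ℚ) : ℂ) - ((gam (d - m) : ℚ) : ℂ)) + 2)
        = ∑ m ∈ Finset.range (d + 1),
            (((d.choose m : ℂ) ^ n * ((n : ℂ) * ((d : ℂ) - 2 * m) * ((gam m : ℚ) : ℂ))
              + 2 * (d.choose m : ℂ) ^ n)
            + (d.choose m : ℂ) ^ n * ((n : ℂ) * ((d : ℂ) - 2 * m) * (-((gam (d - m) : ℚ) : ℂ)))) :=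
          Finset.sum_congr rfl (fun m _ => by ring)
      _ = (∑ m ∈ Finset.range (d + 1),
            ((d.choose m : ℂ) ^ n * ((n : ℂ) * ((d : ℂ) - 2 * m) * ((gam m : ℚ) : ℂ))
              + 2 * (d.choose m : ℂ) ^ n))
          + ∑ m ∈ Finset.range (d + 1),
            (d.choose m : ℂ) ^ n * ((n : ℂ) * ((d : ℂ) - 2 * m) * (-((gam (d - m) : ℚ) : ℂ))) :=
          Finset.sum_add_distrib
      _ = (∑ m ∈ Finset.range (d + 1),
            ((d.choose m : ℂ) ^ n * ((n : ℂ) * ((d : ℂ) - 2 * m) * ((gam m : ℚ) : ℂ))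
              + 2 * (d.choose m : ℂ) ^ n))
          + ∑ m ∈ Finset.range (d + 1),
            (d.choose m : ℂ) ^ n * ((n : ℂ) * ((d : ℂ) - 2 * m) * ((gam m : ℚ) : ℂ)) := by
          rw [hrefl]
      _ = ∑ m ∈ Finset.range (d + 1),
            (((d.choose m : ℂ) ^ n * ((n : ℂ) * ((d : ℂ) - 2 * m) * ((gam m : ℚ) : ℂ))
              + 2 * (d.choose m : ℂ) ^ n)
            + (d.choose m : ℂ) ^ n * ((n : ℂ) * ((d : ℂ) - 2 * m) * ((gam m : ℚ) : ℂ))) :=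
          Finset.sum_add_distrib.symm
      _ = ∑ m ∈ Finset.range (d + 1),
            2 * ((d.choose m : ℂ) ^ n * (1 + ((d : ℂ) - 2 * m) * n * ((gam m : ℚ) : ℂ))) :=
          Finset.sum_congr rfl (fun m _ => by ring)
      _ = 2 * ∑ m ∈ Finset.range (d + 1),
            (d.choose m : ℂ) ^ n * (1 + ((d : ℂ) - 2 * m) * n * ((gam m : ℚ) : ℂ)) :=
          (Finset.mul_sum _ _ _).symm
  rw [hS]
  have hD : ((d.factorial : ℂ)) ^ n ≠ 0 := fact_pow_ne _ _
  field_simp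
  ring_nf
  exact Finset.sum_congr rfl (fun x _ => by ring)

theorem constant_term_limit (n d : ℕ) (hn : 1 ≤ n) :
    Tendsto
      (fun x : ℂ => ∑ m ∈ Finset.range (d + 1),
        (x + 2 * (m : ℂ) - (d : ℂ)) /
          (x * ((((d - m).factorial : ℂ)) ^ n) * ∏ l ∈ Finset.Icc 1 m, (x + (l : ℂ)) ^ n))
      (nhdsWithin 0 {(0 : ℂ)}ᶜ)
      (nhds ((1 / (2 * ((d.factorial : ℂ)) ^ n)) *
        ∑ m ∈ Finset.range (d + 1), (d.choose m : ℂ) ^ n *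
          ((n : ℂ) * ((d : ℂ) - 2 * m) * (((gam m : ℚ) : ℂ) - ((gam (d - m) : ℚ) : ℂ)) + 2))) := by
  have hG := Gf_hasDerivAt n d hn
  rw [hasDerivAt_iff_tendsto_slope] at hG
  rw [← sum_eq n d]
  refine Tendsto.congr (fun x => ?_) hG
  rw [slope_def_field, Gf_zero, sub_zero, sub_zero, Gf, Finset.sum_div]
  refine Finset.sum_congr rfl (fun m _ => ?_)
  simp only [Pf]
  rw [div_div]
  ring
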